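/- Let A be a closed densely defined skew-symmetric operator on a real Hilbert space H, B an m-dissipative operator with B ⊆ A*, and −A ⊆ B. Define B̃ on D(A)+D(B) by B̃(u₁+u₂) = −Au₁ + Bu₂ for u₁ ∈ D(A), u₂ ∈ D(B). Then B̃ is well-defined and dissipative: (B̃u, u) ≤ 0 for all u ∈ D(A)+D(B). -/
import Mathlib


local notation "⟪" x ", " y "⟫" => @inner ℝ _ _ x y

/-- Let `A` be a closed densely defined skew-symmetric operator on a real Hilbert space `H`, `B`
a dissipative operator with `B ⊆ A*` and `−A ⊆ B`. Then the operator `B̃` defined on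
`D(A) + D(B)` by `B̃(u₁ + u₂) = −Au₁ + Bu₂` is well defined (independent of the decomposition)
and dissipative: `(B̃u, u) ≤ 0` for all `u ∈ D(A) + D(B)`. -/
theorem tilde_extension_wellDefined_and_dissipative
    {H : Type*} [NormedAddCommGroup H] [InnerProductSpace ℝ H] [CompleteSpace H]
    (A B : H →ₗ.[ℝ] H) (hAdense : Dense (A.domain : Set H)) (hAclosed : A.IsClosed)
    (hskew : ∀ u v : A.domain, ⟪A u, (v : H)⟫ = -⟪(u : H), A v⟫)
    (hdiss : ∀ u : B.domain, ⟪B u, (u : H)⟫ ≤ 0)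
    (hBA : B ≤ A.adjoint) (hAB : -A ≤ B) :
    (∀ (u₁ u₁' : A.domain) (u₂ u₂' : B.domain),
        (u₁ : H) + (u₂ : H) = (u₁' : H) + (u₂' : H) →
          -(A u₁) + B u₂ = -(A u₁') + B u₂') ∧
      ∀ (u₁ : A.domain) (u₂ : B.domain),
        ⟪-(A u₁) + B u₂, (u₁ : H) + (u₂ : H)⟫ ≤ 0 := by
  constructor
  · intro u₁ u₁' u₂ u₂' h
    set w : (-A).domain := u₁ - u₁' with hw
    have hwB : ((w : H)) ∈ B.domain := hAB.1 w.2
    set w' : B.domain := u₂' - u₂ with hw'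
    have hco : (w : H) = (w' : H) := by
      show ((u₁ : H) - u₁') = ((u₂' : H) - u₂)
      rw [sub_eq_sub_iff_add_eq_add, h, add_comm]
    have key : (-A) w = B w' := hAB.2 hco
    have key2 : -(A u₁ - A u₁') = B u₂' - B u₂ := by
      have h1 : (-A) w = -(A u₁ - A u₁') := by
        rw [LinearPMap.neg_apply]
        congr 1
        have : A.toFun w = A.toFun u₁ - A.toFun u₁' := by
          rw [hw]; exact map_sub _ _ _
        exact this
      have h2 : B w' = B u₂' - B u₂ := by
        rw [hw']; exact map_sub _ _ _
      rw [← h1, ← h2, key]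
    have : B u₂' = A u₁' - A u₁ + B u₂ := by
      rw [neg_sub] at key2
      exact eq_add_of_sub_eq key2.symm
    rw [this]; abel
  · intro u₁ u₂
    have h0 : ⟪A u₁, (u₁ : H)⟫ = 0 := by
      have h := hskew u₁ u₁
      have h' : ⟪A u₁, (u₁ : H)⟫ = -⟪A u₁, (u₁ : H)⟫ := by
        conv_lhs => rw [h]
        rw [real_inner_comm]
      linarith
    have hu₂ : (u₂ : H) ∈ A.adjoint.domain := hBA.1 u₂.2
    have hBeq : B u₂ = A.adjoint ⟨(u₂ : H), hu₂⟩ := hBA.2 rfl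
    have hadj := LinearPMap.adjoint_isFormalAdjoint hAdense ⟨(u₂ : H), hu₂⟩ u₁
    rw [← hBeq] at hadj
    have cross : ⟪B u₂, (u₁ : H)⟫ = ⟪(u₂ : H), A u₁⟫ := hadj
    have hB : ⟪B u₂, (u₂ : H)⟫ ≤ 0 := hdiss u₂
    have expand : ⟪-(A u₁) + B u₂, (u₁ : H) + (u₂ : H)⟫ =
        -⟪A u₁, (u₁ : H)⟫ - ⟪A u₁, (u₂ : H)⟫ + ⟪B u₂, (u₁ : H)⟫ + ⟪B u₂, (u₂ : H)⟫ := by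
      rw [inner_add_left, inner_add_right, inner_add_right, inner_neg_left, inner_neg_left]
      ring
    rw [expand, h0, cross, real_inner_comm (u₂ : H) (A u₁)]
    linarith
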